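/- arXiv:1803.07579 — 6 statements merged into one kernel-verified Lean document; each statement's English description precedes it below -/
import Mathlib

section
/- Let f : [0,∞) → ℝ be continuous satisfying (f₁), (f₂), (f₃), and let e, q > 0. Then c_F := sup_{s>0} 4F(s)/(2s² + e q s⁴) is finite, positive, and attained at some s > 0. -/
open Filter

theorem stmt_2 (f : ℝ → ℝ) (hf : Continuous f)
    (hneg : ∀ s ≤ (0 : ℝ), f s = 0)
    (hf1 : Tendsto (fun s => f s / s) (nhdsWithin 0 (Set.Ioi 0)) (nhds 0))
    (hf2 : Tendsto (fun s => f s / s) atTop (nhds 0))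
    (hf3 : ∃ s₀ > (0 : ℝ), 0 < ∫ t in (0:ℝ)..s₀, f t)
    (e q : ℝ) (he : 0 < e) (hq : 0 < q)
    (F : ℝ → ℝ) (hF : ∀ s, F s = ∫ t in (0:ℝ)..s, f t) :
    ∃ s > (0 : ℝ), 0 < 4 * F s / (2 * s ^ 2 + e * q * s ^ 4) ∧
      ∀ t > (0 : ℝ),
        4 * F t / (2 * t ^ 2 + e * q * t ^ 4) ≤ 4 * F s / (2 * s ^ 2 + e * q * s ^ 4) := by
  have hFeq : F = fun s => ∫ t in (0:ℝ)..s, f t := funext hF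
  have hint : ∀ a b : ℝ, IntervalIntegrable f MeasureTheory.volume a b :=
    fun a b => hf.intervalIntegrable a b
  have hFcont : Continuous F := by
    rw [hFeq]; exact intervalIntegral.continuous_primitive hint 0
  have hD : ∀ s : ℝ, 0 < s → 0 < 2 * s ^ 2 + e * q * s ^ 4 := by
    intro s hs
    have h1 : 0 < s ^ 2 := pow_pos hs 2
    have h2 : 0 < s ^ 4 := pow_pos hs 4
    nlinarith [mul_pos (mul_pos he hq) h2]
  obtain ⟨s₀, hs₀, hFs₀'⟩ := hf3
  have hFs₀ : 0 < F s₀ := by rw [hF]; exact hFs₀'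
  set g : ℝ → ℝ := fun s => 4 * F s / (2 * s ^ 2 + e * q * s ^ 4) with hg
  set c₀ : ℝ := g s₀ with hc₀def
  have hc₀ : 0 < c₀ := div_pos (by linarith) (hD s₀ hs₀)
  have hgcont : ContinuousOn g (Set.Ioi 0) := by
    apply ContinuousOn.div
    · exact (continuous_const.mul hFcont).continuousOn
    · fun_prop
    · intro s hs; exact ne_of_gt (hD s hs)
  -- small s claim
  have hsmall : ∃ δ > (0:ℝ), ∀ s : ℝ, 0 < s → s < δ → g s < c₀ := by
    obtain ⟨δ, hδ, hδ'⟩ := Metric.tendsto_nhdsWithin_nhds.mp hf1 (c₀ / 2) (by linarith)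
    refine ⟨δ, hδ, fun s hs hsδ => ?_⟩
    have hfb : ∀ t ∈ Set.Icc (0:ℝ) s, f t ≤ c₀ / 2 * t := by
      intro t ht
      rcases eq_or_lt_of_le ht.1 with h | h
      · rw [← h, hneg 0 le_rfl]; simp
      · have hd : dist t 0 < δ := by
          rw [Real.dist_eq, sub_zero, abs_of_pos h]; exact lt_of_le_of_lt ht.2 hsδ
        have := hδ' h hd
        rw [Real.dist_eq, sub_zero] at this
        have h2 : f t / t < c₀ / 2 := lt_of_abs_lt this
        have h3 : f t / t * t ≤ c₀ / 2 * t := mul_le_mul_of_nonneg_right h2.le h.le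
        rwa [div_mul_cancel₀ _ (ne_of_gt h)] at h3
    have hFle : F s ≤ c₀ / 2 * s ^ 2 / 2 := by
      rw [hF]
      have h1 : (∫ t in (0:ℝ)..s, f t) ≤ ∫ t in (0:ℝ)..s, c₀ / 2 * t :=
        intervalIntegral.integral_mono_on hs.le (hint 0 s)
          ((by fun_prop : Continuous fun t : ℝ => c₀ / 2 * t).intervalIntegrable 0 s) hfb
      have h2 : (∫ t in (0:ℝ)..s, c₀ / 2 * t) = c₀ / 2 * s ^ 2 / 2 := by
        rw [intervalIntegral.integral_const_mul, integral_id]; ring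
      linarith
    show 4 * F s / (2 * s ^ 2 + e * q * s ^ 4) < c₀
    rw [div_lt_iff₀ (hD s hs)]
    have h2 : 0 < s ^ 2 := pow_pos hs 2
    have h4 : 0 < s ^ 4 := pow_pos hs 4
    nlinarith [mul_pos (mul_pos he hq) h4, mul_pos hc₀ h2,
      mul_pos hc₀ (mul_pos (mul_pos he hq) h4)]
  -- large s claim
  have hlarge : ∃ M : ℝ, s₀ ≤ M ∧ ∀ s : ℝ, M < s → g s < c₀ := by
    obtain ⟨N, hN⟩ := Metric.tendsto_atTop.mp hf2 1 one_pos
    set M₀ : ℝ := max N 1 with hM₀def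
    have hM₀1 : (1:ℝ) ≤ M₀ := le_max_right _ _
    have hM₀0 : (0:ℝ) < M₀ := lt_of_lt_of_le one_pos hM₀1
    set C : ℝ := F M₀ with hCdef
    set K : ℝ := c₀ * (e * q) with hKdef
    have hK : 0 < K := mul_pos hc₀ (mul_pos he hq)
    refine ⟨max (max s₀ M₀) ((4 * |C| + 2) / K + 1), le_trans (le_max_left _ _) (le_max_left _ _),
      fun s hs => ?_⟩
    have hsM₀ : M₀ ≤ s := le_trans (le_trans (le_max_right _ _) (le_max_left _ _)) hs.le
    have hs1 : (1:ℝ) ≤ s := le_trans hM₀1 hsM₀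
    have hs0 : (0:ℝ) < s := lt_of_lt_of_le one_pos hs1
    have hsB : (4 * |C| + 2) / K < s := lt_of_lt_of_le
      (lt_of_lt_of_le (lt_add_one _) (le_max_right _ _)) hs.le
    have h5 : 4 * |C| + 2 < K * s := by
      rw [div_lt_iff₀ hK] at hsB; linarith [mul_comm K s]
    have hfb : ∀ t ∈ Set.Icc M₀ s, f t ≤ t := by
      intro t ht
      have ht0 : 0 < t := lt_of_lt_of_le hM₀0 ht.1
      have hNt : N ≤ t := le_trans (le_max_left _ _) ht.1
      have := hN t hNt
      rw [Real.dist_eq, sub_zero] at this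
      have h2 : f t / t < 1 := lt_of_abs_lt this
      have h3 : f t / t * t ≤ 1 * t := mul_le_mul_of_nonneg_right h2.le ht0.le
      rwa [div_mul_cancel₀ _ (ne_of_gt ht0), one_mul] at h3
    have hFle : F s ≤ C + (s ^ 2 - M₀ ^ 2) / 2 := by
      have hsplit : F s = C + ∫ t in M₀..s, f t := by
        rw [hF, hCdef, hF, intervalIntegral.integral_add_adjacent_intervals (hint 0 M₀) (hint M₀ s)]
      rw [hsplit]
      have : (∫ t in M₀..s, f t) ≤ ∫ t in M₀..s, t :=
        intervalIntegral.integral_mono_on hsM₀ (hint M₀ s)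
          (continuous_id.intervalIntegrable M₀ s) hfb
      rw [integral_id] at this
      linarith
    show 4 * F s / (2 * s ^ 2 + e * q * s ^ 4) < c₀
    rw [div_lt_iff₀ (hD s hs0)]
    have habs : C ≤ |C| := le_abs_self C
    have h2 : 0 < s ^ 2 := pow_pos hs0 2
    have h3 : 0 < s ^ 3 := pow_pos hs0 3
    have hM₀sq : 0 ≤ M₀ ^ 2 := sq_nonneg M₀
    -- 4 F s ≤ 4C + 2 s² ≤ 4|C| + 2 s² ≤ (4|C| + 2) s³ < K s⁴ ≤ c₀ (2s² + eqs⁴)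
    have key : (4 * |C| + 2) * s ^ 3 < K * s * s ^ 3 :=
      mul_lt_mul_of_pos_right h5 h3
    have habs0 : 0 ≤ |C| := abs_nonneg C
    nlinarith [mul_pos hc₀ h2, mul_le_mul_of_nonneg_left (one_le_pow₀ hs1 (n := 3)) habs0,
      sq_nonneg (s - 1), mul_nonneg habs0 (sub_nonneg.mpr (one_le_pow₀ hs1 (n := 3)))]
  obtain ⟨δ, hδ, hA⟩ := hsmall
  obtain ⟨M, hM, hB⟩ := hlarge
  set a : ℝ := min (δ / 2) s₀ with hadef
  have ha : 0 < a := lt_min (by linarith) hs₀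
  have has₀ : a ≤ s₀ := min_le_right _ _
  have haδ : a < δ := lt_of_le_of_lt (min_le_left _ _) (by linarith)
  have hmemIcc : s₀ ∈ Set.Icc a M := ⟨has₀, hM⟩
  have hsub : Set.Icc a M ⊆ Set.Ioi (0:ℝ) := fun x hx => lt_of_lt_of_le ha hx.1
  obtain ⟨s, hsmem, hmax⟩ :=
    (isCompact_Icc).exists_isMaxOn ⟨s₀, hmemIcc⟩ (hgcont.mono hsub)
  have hss : 0 < s := lt_of_lt_of_le ha hsmem.1
  have hgs : c₀ ≤ g s := hmax hmemIcc
  refine ⟨s, hss, lt_of_lt_of_le hc₀ hgs, fun t ht => ?_⟩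
  by_cases hta : a ≤ t
  · by_cases htM : t ≤ M
    · exact hmax ⟨hta, htM⟩
    · exact le_trans (hB t (lt_of_not_ge htM)).le hgs
  · have : t < δ := lt_trans (lt_of_not_ge hta) haδ
    exact le_trans (hA t ht this).le hgs
end

section
/- Let f : [0,∞) → ℝ be continuous satisfying (f₁), (f₂), (f₃) and e, q > 0. Define c_f = max_{s>0} f(s)/s and c_F = max_{s>0} 4F(s)/(2s² + e q s⁴), where F(s) = ∫₀ˢ f(t) dt. Then c_f > c_F (strict inequality). -/
open Filter

theorem stmt_3 (f : ℝ → ℝ) (hf : Continuous f)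
    (hneg : ∀ s ≤ (0 : ℝ), f s = 0)
    (hf1 : Tendsto (fun s => f s / s) (nhdsWithin 0 (Set.Ioi 0)) (nhds 0))
    (hf2 : Tendsto (fun s => f s / s) atTop (nhds 0))
    (hf3 : ∃ s₀ > (0 : ℝ), 0 < ∫ t in (0:ℝ)..s₀, f t)
    (e q : ℝ) (he : 0 < e) (hq : 0 < q)
    (F : ℝ → ℝ) (hF : ∀ s, F s = ∫ t in (0:ℝ)..s, f t)
    (cf cF : ℝ)
    (hcf : IsGreatest ((fun s => f s / s) '' Set.Ioi 0) cf)
    (hcF : IsGreatest ((fun s => 4 * F s / (2 * s ^ 2 + e * q * s ^ 4)) '' Set.Ioi 0) cF) :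
    cF < cf := by
  obtain ⟨s₀, hs₀, hFs₀⟩ := hf3
  -- cF is positive
  have hDen : ∀ s : ℝ, 0 < s → 0 < 2 * s ^ 2 + e * q * s ^ 4 := by
    intro s hs; positivity
  have hcF0 : 0 < cF := by
    have h1 : 4 * F s₀ / (2 * s₀ ^ 2 + e * q * s₀ ^ 4) ≤ cF :=
      hcF.2 ⟨s₀, hs₀, rfl⟩
    have h2 : 0 < 4 * F s₀ / (2 * s₀ ^ 2 + e * q * s₀ ^ 4) := by
      apply div_pos _ (hDen s₀ hs₀)
      rw [hF]; linarith
    linarith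
  obtain ⟨s, hs, hseq⟩ := hcF.1
  simp only [Set.mem_Ioi] at hs
  simp only [] at hseq
  -- F s ≤ cf * s^2 / 2
  have hfle : ∀ t ∈ Set.Icc (0:ℝ) s, f t ≤ cf * t := by
    intro t ht
    rcases eq_or_lt_of_le ht.1 with h | h
    · rw [← h, hneg 0 le_rfl]; simp
    · have := hcf.2 ⟨t, h, rfl⟩
      calc f t = f t / t * t := by field_simp
        _ ≤ cf * t := by
            apply mul_le_mul_of_nonneg_right this h.le
  have hFle : F s ≤ cf * s ^ 2 / 2 := by
    rw [hF]
    have h1 : (∫ t in (0:ℝ)..s, f t) ≤ ∫ t in (0:ℝ)..s, cf * t := by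
      apply intervalIntegral.integral_mono_on hs.le
        (hf.intervalIntegrable 0 s)
        ((continuous_const.mul continuous_id).intervalIntegrable 0 s)
        hfle
    have h2 : (∫ t in (0:ℝ)..s, cf * t) = cf * s ^ 2 / 2 := by
      rw [intervalIntegral.integral_const_mul, integral_id]
      ring
    linarith
  have hcf0 : 0 < cf := by
    have hFs : 0 < F s := by
      by_contra h
      push_neg at h
      have : 4 * F s / (2 * s ^ 2 + e * q * s ^ 4) ≤ 0 :=
        div_nonpos_of_nonpos_of_nonneg (by linarith) (hDen s hs).le
      rw [hseq] at this; linarith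
    nlinarith [sq_nonneg s]
  rw [← hseq, div_lt_iff₀ (hDen s hs)]
  nlinarith [mul_pos (mul_pos (mul_pos hcf0 he) hq) (pow_pos hs 4)]
end

section
/- Let g : [1,∞) → ℝ be continuous with g(1) = −1, such that s ↦ g(s)/s is non-decreasing on [1,∞). Let G(s) = ∫₁ˢ g(t) dt. Then the function s ↦ G(s)/((s² − 1)/2) is non-decreasing on (1,∞). -/
theorem stmt_6 (g : ℝ → ℝ) (hg : ContinuousOn g (Set.Ici 1))
    (hg1 : g 1 = -1)
    (hmono : ∀ s₁ s₂ : ℝ, 1 ≤ s₁ → s₁ ≤ s₂ → g s₁ / s₁ ≤ g s₂ / s₂)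
    (G : ℝ → ℝ) (hG : ∀ s, G s = ∫ t in (1:ℝ)..s, g t) :
    ∀ s₁ s₂ : ℝ, 1 < s₁ → s₁ ≤ s₂ →
      G s₁ / ((s₁ ^ 2 - 1) / 2) ≤ G s₂ / ((s₂ ^ 2 - 1) / 2) := by
  intro s₁ s₂ hs₁ h12
  have hs₂ : (1:ℝ) < s₂ := lt_of_lt_of_le hs₁ h12
  set c : ℝ := g s₁ / s₁ with hc
  have hint : ∀ a b : ℝ, 1 ≤ a → a ≤ b → IntervalIntegrable g MeasureTheory.volume a b := by
    intro a b ha hab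
    apply (hg.mono _).intervalIntegrable
    rw [Set.uIcc_of_le hab]
    exact fun x hx => le_trans ha hx.1
  have hA₁ : (0:ℝ) < (s₁ ^ 2 - 1) / 2 := by nlinarith
  have hA₂ : (0:ℝ) < (s₂ ^ 2 - 1) / 2 := by nlinarith
  -- G s₁ ≤ c * ((s₁^2 - 1)/2)
  have hG1 : G s₁ ≤ c * ((s₁ ^ 2 - 1) / 2) := by
    have h1 : (∫ t in (1:ℝ)..s₁, g t) ≤ ∫ t in (1:ℝ)..s₁, c * t := by
      apply intervalIntegral.integral_mono_on hs₁.le (hint 1 s₁ le_rfl hs₁.le)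
        ((continuous_const.mul continuous_id).intervalIntegrable 1 s₁)
      intro t ht
      have ht0 : (0:ℝ) < t := lt_of_lt_of_le one_pos ht.1
      have := hmono t s₁ ht.1 ht.2
      calc g t = (g t / t) * t := by field_simp
        _ ≤ c * t := by apply mul_le_mul_of_nonneg_right this ht0.le
    rw [hG]
    calc (∫ t in (1:ℝ)..s₁, g t) ≤ ∫ t in (1:ℝ)..s₁, c * t := h1
      _ = c * ((s₁ ^ 2 - 1) / 2) := by
          rw [intervalIntegral.integral_const_mul, integral_id]; ring_nf
  -- ∫ s₁..s₂ g ≥ c * ((s₂^2 - s₁^2)/2)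
  have hI : c * ((s₂ ^ 2 - s₁ ^ 2) / 2) ≤ ∫ t in s₁..s₂, g t := by
    have h1 : (∫ t in s₁..s₂, c * t) ≤ ∫ t in s₁..s₂, g t := by
      apply intervalIntegral.integral_mono_on h12
        ((continuous_const.mul continuous_id).intervalIntegrable s₁ s₂)
        (hint s₁ s₂ hs₁.le h12)
      intro t ht
      have ht0 : (0:ℝ) < t := lt_of_lt_of_le one_pos (le_trans hs₁.le ht.1)
      have := hmono s₁ t hs₁.le ht.1
      calc c * t ≤ (g t / t) * t := by apply mul_le_mul_of_nonneg_right this ht0.le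
        _ = g t := by field_simp
    calc c * ((s₂ ^ 2 - s₁ ^ 2) / 2) = ∫ t in s₁..s₂, c * t := by
          rw [intervalIntegral.integral_const_mul, integral_id]
      _ ≤ _ := h1
  have hsplit : G s₂ = G s₁ + ∫ t in s₁..s₂, g t := by
    rw [hG, hG, intervalIntegral.integral_add_adjacent_intervals
      (hint 1 s₁ le_rfl hs₁.le) (hint s₁ s₂ hs₁.le h12)]
  have hB : (0:ℝ) ≤ (s₂ ^ 2 - s₁ ^ 2) / 2 := by nlinarith
  rw [div_le_div_iff₀ hA₁ hA₂]
  have hA₂eq : (s₂ ^ 2 - 1) / 2 = (s₁ ^ 2 - 1) / 2 + (s₂ ^ 2 - s₁ ^ 2) / 2 := by ring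
  rw [hA₂eq, hsplit]
  have key1 : G s₁ * ((s₂ ^ 2 - s₁ ^ 2) / 2) ≤ c * ((s₁ ^ 2 - 1) / 2) * ((s₂ ^ 2 - s₁ ^ 2) / 2) :=
    mul_le_mul_of_nonneg_right hG1 hB
  have key2 : c * ((s₂ ^ 2 - s₁ ^ 2) / 2) * ((s₁ ^ 2 - 1) / 2)
      ≤ (∫ t in s₁..s₂, g t) * ((s₁ ^ 2 - 1) / 2) :=
    mul_le_mul_of_nonneg_right hI hA₁.le
  nlinarith [key1, key2]
end

section
/- Let a > 1 and define f : [0,∞) → ℝ by f(s) = 0 for 0 ≤ s < 1, f(s) = s − 1 for 1 ≤ s < a, and f(s) = a − 1 for s ≥ a (i.e., g(s) = −1). Then max_{s>0} f(s)/s = (a−1)/a and max_{s>0} 2F(s)/s² = (a−1)/(a+1), where F(s) = ∫₀ˢ f(t) dt. -/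
theorem stmt_8 (a : ℝ) (ha : 1 < a)
    (f : ℝ → ℝ)
    (hfdef : ∀ s : ℝ, f s = if s < 1 then 0 else if s < a then s - 1 else a - 1)
    (F : ℝ → ℝ) (hF : ∀ s, F s = ∫ t in (0:ℝ)..s, f t) :
    IsGreatest ((fun s => f s / s) '' Set.Ioi 0) ((a - 1) / a) ∧
    IsGreatest ((fun s => 2 * F s / s ^ 2) '' Set.Ioi 0) ((a - 1) / (a + 1)) := by
  have ha0 : (0:ℝ) < a := by linarith
  -- f is continuous: f = min (max (s-1) 0) (a-1)
  have hf' : f = fun s => min (max (s - 1) 0) (a - 1) := by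
    funext s
    rw [hfdef s]
    split_ifs with h1 h2
    · rw [max_eq_right (by linarith), min_eq_left (by linarith)]
    · rw [max_eq_left (by linarith), min_eq_left (by linarith)]
    · rw [max_eq_left (by linarith), min_eq_right (by linarith)]
  have hc : Continuous f := by
    rw [hf']
    exact ((continuous_id.sub continuous_const).max continuous_const).min continuous_const
  have hint : ∀ x y : ℝ, IntervalIntegrable f MeasureTheory.volume x y :=
    fun x y => hc.intervalIntegrable x y
  -- F on [0,1]
  have F1 : ∀ s : ℝ, 0 ≤ s → s ≤ 1 → F s = 0 := by
    intro s hs0 hs1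
    rw [hF s]
    have : (∫ t in (0:ℝ)..s, f t) = ∫ _ in (0:ℝ)..s, (0:ℝ) := by
      apply intervalIntegral.integral_congr
      intro t ht
      rw [Set.uIcc_of_le hs0] at ht
      rw [hfdef t]
      split_ifs with h1 h2
      · rfl
      · have : t = 1 := le_antisymm (le_trans ht.2 hs1) (not_lt.1 h1)
        simp [this]
      · exfalso; exact h2 (lt_of_le_of_lt (le_trans ht.2 hs1) ha)
    rw [this]; simp
  -- F on [1,a]
  have F2 : ∀ s : ℝ, 1 ≤ s → s ≤ a → F s = (s - 1) ^ 2 / 2 := by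
    intro s hs1 hsa
    rw [hF s, ← intervalIntegral.integral_add_adjacent_intervals (hint 0 1) (hint 1 s)]
    have h01 : (∫ t in (0:ℝ)..1, f t) = 0 := by
      rw [← hF 1]; exact F1 1 zero_le_one le_rfl
    have h1s : (∫ t in (1:ℝ)..s, f t) = (s - 1) ^ 2 / 2 := by
      have hcg : (∫ t in (1:ℝ)..s, f t) = ∫ t in (1:ℝ)..s, (t - 1) := by
        apply intervalIntegral.integral_congr
        intro t ht
        rw [Set.uIcc_of_le hs1] at ht
        rw [hfdef t]
        split_ifs with h1 h2
        · exfalso; linarith [ht.1]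
        · rfl
        · have : t = a := le_antisymm (le_trans ht.2 hsa) (not_lt.1 h2)
          rw [this]
      rw [hcg]
      have := intervalIntegral.integral_comp_sub_right (fun t => t) 1 (a := (1:ℝ)) (b := s)
      rw [this, integral_id]
      norm_num
    rw [h01, h1s]; ring
  -- F on [a, ∞)
  have F3 : ∀ s : ℝ, a ≤ s → F s = (a - 1) ^ 2 / 2 + (a - 1) * (s - a) := by
    intro s hsa
    rw [hF s, ← intervalIntegral.integral_add_adjacent_intervals (hint 0 a) (hint a s)]
    have h0a : (∫ t in (0:ℝ)..a, f t) = (a - 1) ^ 2 / 2 := by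
      rw [← hF a]; exact F2 a ha.le le_rfl
    have has : (∫ t in a..s, f t) = (a - 1) * (s - a) := by
      have hcg : (∫ t in a..s, f t) = ∫ _ in a..s, (a - 1) := by
        apply intervalIntegral.integral_congr
        intro t ht
        rw [Set.uIcc_of_le hsa] at ht
        rw [hfdef t]
        split_ifs with h1 h2
        · exfalso; linarith [ht.1]
        · exfalso; linarith [ht.1]
        · rfl
      rw [hcg, intervalIntegral.integral_const]
      rw [smul_eq_mul]; ring
    rw [h0a, has]
  constructor
  · constructor
    · refine ⟨a, Set.mem_Ioi.2 ha0, ?_⟩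
      simp only [hfdef a]
      rw [if_neg (by linarith), if_neg (lt_irrefl a)]
    · rintro x ⟨s, hs, rfl⟩
      have hs0 : (0:ℝ) < s := hs
      simp only
      rw [div_le_div_iff₀ hs0 ha0, hfdef s]
      split_ifs with h1 h2
      · nlinarith
      · nlinarith
      · nlinarith
  · constructor
    · refine ⟨a + 1, Set.mem_Ioi.2 (by linarith), ?_⟩
      simp only
      rw [F3 (a + 1) (by linarith)]
      rw [div_eq_div_iff (by positivity) (by linarith)]
      ring
    · rintro x ⟨s, hs, rfl⟩
      have hs0 : (0:ℝ) < s := hs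
      simp only
      rw [div_le_div_iff₀ (by positivity) (by linarith)]
      rcases le_or_gt s 1 with h1 | h1
      · rw [F1 s hs0.le h1]
        nlinarith
      · rcases le_or_gt s a with h2 | h2
        · rw [F2 s h1.le h2]
          nlinarith [mul_nonneg (by linarith : (0:ℝ) ≤ s - 1) (by linarith : (0:ℝ) ≤ a - s)]
        · rw [F3 s h2.le]
          nlinarith [mul_nonneg (by linarith : (0:ℝ) ≤ a - 1) (sq_nonneg (s - (a + 1)))]
end

section
/- Let a > 1 and f, g, G be as in the paper's example: f(s) = 0 on [0,1), f(s) = s + g(s) on [1,a), f(s) = a + g(a) on [a,∞), with g(1) = −1, g(s)/s non-decreasing, G(s) = ∫₁ˢ g(t) dt, F(s) = ∫₀ˢ f(t) dt. Then max_{s>0} 2F(s)/s² = (a + g(a))²/(a² + 2a·g(a) − 2G(a) + 1), and the maximum is attained on [a,∞). -/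
open Set MeasureTheory intervalIntegral

theorem stmt_10 (a : ℝ) (ha : 1 < a)
    (g : ℝ → ℝ) (hg : ContinuousOn g (Set.Ici 1))
    (hg1 : g 1 = -1)
    (hmono : ∀ s₁ s₂ : ℝ, 1 ≤ s₁ → s₁ ≤ s₂ → g s₁ / s₁ ≤ g s₂ / s₂)
    (G : ℝ → ℝ) (hG : ∀ s, G s = ∫ t in (1:ℝ)..s, g t)
    (f : ℝ → ℝ)
    (hfdef : ∀ s : ℝ, f s = if s < 1 then 0 else if s < a then s + g s else a + g a)
    (F : ℝ → ℝ) (hF : ∀ s, F s = ∫ t in (0:ℝ)..s, f t) :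
    ∃ s : ℝ, a ≤ s ∧
      2 * F s / s ^ 2 = (a + g a) ^ 2 / (a ^ 2 + 2 * a * g a - 2 * G a + 1) ∧
      ∀ t > (0 : ℝ),
        2 * F t / t ^ 2 ≤ (a + g a) ^ 2 / (a ^ 2 + 2 * a * g a - 2 * G a + 1) := by
  have ha0 : (0:ℝ) < a := lt_trans one_pos ha
  -- integrability of g on intervals inside [1, ∞)
  have hgi : ∀ x y : ℝ, 1 ≤ x → 1 ≤ y → IntervalIntegrable g volume x y := by
    intro x y hx hy
    apply (hg.mono ?_).intervalIntegrable
    intro z hz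
    rcases Set.mem_uIcc.mp hz with h | h
    · exact le_trans hx h.1
    · exact le_trans hy h.1
  have hq : ∀ t : ℝ, 1 ≤ t → -1 ≤ g t / t := by
    intro t ht
    have := hmono 1 t le_rfl ht
    simpa [hg1] using this
  -- f agrees with 0 on [0,1]
  have hEq01 : Set.EqOn f (fun _ => (0:ℝ)) (Set.Icc 0 1) := by
    intro u hu
    by_cases h : u < 1
    · simp [hfdef, h]
    · have hu1 : u = 1 := le_antisymm hu.2 (not_lt.mp h)
      subst hu1
      norm_num [hfdef, ha, hg1]
  have hfc01 : IntervalIntegrable f volume 0 1 := by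
    apply ContinuousOn.intervalIntegrable
    rw [Set.uIcc_of_le (by norm_num : (0:ℝ) ≤ 1)]
    exact continuousOn_const.congr hEq01
  -- f agrees with u + g u on [1, t] for t ≤ a
  have hEqmid : ∀ t : ℝ, t ≤ a → Set.EqOn f (fun u => u + g u) (Set.Icc 1 t) := by
    intro t hta u hu
    have h1 : ¬ u < 1 := not_lt.mpr hu.1
    by_cases h : u < a
    · simp [hfdef, h1, h]
    · have hua : u = a := le_antisymm (le_trans hu.2 hta) (not_lt.mp h)
      subst hua
      simp [hfdef, h1, h]
  have hfcmid : ∀ t : ℝ, 1 ≤ t → t ≤ a → IntervalIntegrable f volume 1 t := by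
    intro t ht hta
    apply ContinuousOn.intervalIntegrable
    rw [Set.uIcc_of_le ht]
    refine ContinuousOn.congr ?_ (hEqmid t hta)
    exact (continuous_id.continuousOn).add (hg.mono (fun z hz => hz.1))
  -- value of F on [0,1]
  have hF01 : ∀ t : ℝ, 0 ≤ t → t ≤ 1 → F t = 0 := by
    intro t h0 h1
    rw [hF t]
    rw [integral_congr (g := fun _ => (0:ℝ)) ?_]
    · simp
    · intro u hu
      rw [Set.uIcc_of_le h0] at hu
      exact hEq01 ⟨hu.1, le_trans hu.2 h1⟩
  -- value of F on [1,a]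
  have hFmid : ∀ t : ℝ, 1 ≤ t → t ≤ a → F t = (t^2 - 1)/2 + G t := by
    intro t ht hta
    have hadd := integral_add_adjacent_intervals hfc01 (hfcmid t ht hta)
    have h01 : (∫ u in (0:ℝ)..1, f u) = 0 := by
      rw [integral_congr (g := fun _ => (0:ℝ)) ?_]
      · simp
      · intro u hu
        rw [Set.uIcc_of_le (by norm_num : (0:ℝ) ≤ 1)] at hu
        exact hEq01 hu
    have h1t : (∫ u in (1:ℝ)..t, f u) = (t^2 - 1)/2 + G t := by
      rw [integral_congr (g := fun u => u + g u) ?_]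
      · rw [integral_add intervalIntegrable_id (hgi 1 t le_rfl ht)]
        rw [integral_id, ← hG t]
        ring
      · intro u hu
        rw [Set.uIcc_of_le ht] at hu
        exact hEqmid t hta hu
    rw [hF t, ← hadd, h01, h1t]
    ring
  -- value of F on [a, ∞)
  have hfc0a : IntervalIntegrable f volume 0 a :=
    hfc01.trans (hfcmid a ha.le le_rfl)
  have hEqtop : ∀ t : ℝ, a ≤ t → Set.EqOn f (fun _ => a + g a) (Set.Icc a t) := by
    intro t hta u hu
    have h1 : ¬ u < 1 := not_lt.mpr (le_trans (le_of_lt ha) hu.1)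
    have h2 : ¬ u < a := not_lt.mpr hu.1
    simp [hfdef, h1, h2]
  have hFtop : ∀ t : ℝ, a ≤ t →
      F t = (a + g a) * t - (a^2 + 2*a*g a - 2*G a + 1)/2 := by
    intro t hta
    have hfcat : IntervalIntegrable f volume a t := by
      apply ContinuousOn.intervalIntegrable
      rw [Set.uIcc_of_le hta]
      exact continuousOn_const.congr (hEqtop t hta)
    have hadd := integral_add_adjacent_intervals hfc0a hfcat
    have hat : (∫ u in a..t, f u) = (t - a) * (a + g a) := by
      rw [integral_congr (g := fun _ => a + g a) ?_]
      · simp [smul_eq_mul, mul_add]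
      · intro u hu
        rw [Set.uIcc_of_le hta] at hu
        exact hEqtop t hta hu
    have hFa : F a = (a^2 - 1)/2 + G a := hFmid a ha.le le_rfl
    have : F t = F a + (t - a) * (a + g a) := by
      rw [hF t, hF a, ← hadd, hat]
    rw [this, hFa]
    ring
  -- upper bound on G t :  2 G t ≤ (t²-1)(g t / t)
  have hK4 : ∀ t : ℝ, 1 ≤ t → 2 * G t ≤ (t^2 - 1) * (g t / t) := by
    intro t ht
    have hmonoInt : (∫ u in (1:ℝ)..t, g u) ≤ ∫ u in (1:ℝ)..t, u * (g t / t) := by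
      apply integral_mono_on ht (hgi 1 t le_rfl ht)
        (intervalIntegrable_id.mul_const _)
      intro u hu
      have hu0 : (0:ℝ) < u := lt_of_lt_of_le one_pos hu.1
      have := hmono u t hu.1 hu.2
      calc g u = (g u / u) * u := by field_simp
        _ ≤ (g t / t) * u := by nlinarith
        _ = u * (g t / t) := mul_comm _ _
    have hlin : (∫ u in (1:ℝ)..t, u * (g t / t)) = (t^2 - 1)/2 * (g t / t) := by
      rw [intervalIntegral.integral_mul_const, integral_id]; norm_num
    rw [hlin] at hmonoInt
    rw [hG t] at *
    linarith
  -- lower bound:  (g t / t)(a²-t²)/2 ≤ G a - G t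
  have hK6 : ∀ t : ℝ, 1 ≤ t → t ≤ a → (g t / t) * (a^2 - t^2) / 2 ≤ G a - G t := by
    intro t ht hta
    have hadd := integral_add_adjacent_intervals (hgi 1 t le_rfl ht)
      (hgi t a ht (le_trans ht hta))
    have hmonoInt : (∫ u in t..a, u * (g t / t)) ≤ ∫ u in t..a, g u := by
      apply integral_mono_on hta (intervalIntegrable_id.mul_const _)
        (hgi t a ht (le_trans ht hta))
      intro u hu
      have hu0 : (0:ℝ) < u := lt_of_lt_of_le one_pos (le_trans ht hu.1)
      have := hmono t u ht hu.1
      calc u * (g t / t) = (g t / t) * u := mul_comm _ _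
        _ ≤ (g u / u) * u := by nlinarith
        _ = g u := by field_simp
    have hlin : (∫ u in t..a, u * (g t / t)) = (a^2 - t^2)/2 * (g t / t) := by
      rw [intervalIntegral.integral_mul_const, integral_id]
    have hta' : (∫ u in t..a, g u) = G a - G t := by
      rw [hG a, hG t, ← hadd]; ring
    rw [hlin, hta'] at hmonoInt
    linarith
  -- abbreviations
  obtain ⟨c, hc_def⟩ : ∃ c, a + g a = c := ⟨_, rfl⟩
  obtain ⟨D, hD_def⟩ : ∃ D, a^2 + 2*a*g a - 2*G a + 1 = D := ⟨_, rfl⟩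
  rw [hc_def, hD_def]
  have hFtop' : ∀ t : ℝ, a ≤ t → F t = c * t - D / 2 := by
    intro t hta
    rw [hFtop t hta, hc_def, hD_def]
  have hga : -1 * a ≤ g a := (le_div_iff₀ ha0).mp (hq a ha.le)
  have hc0 : 0 ≤ c := by rw [← hc_def]; linarith
  -- a * c ≤ D
  have hDac : a * c ≤ D := by
    rw [← hc_def, ← hD_def]
    have h4 := hK4 a ha.le
    have hqa := hq a ha.le
    have hgaq : (a^2 - 1) * (g a / a) = a * g a - g a / a := by
      field_simp
    nlinarith [hqa, h4, hgaq]
  -- the top estimate:  for t ≥ a,  2 F t / t² ≤ c²/D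
  have htop : 0 < D → ∀ t : ℝ, a ≤ t → 2 * F t / t ^ 2 ≤ c ^ 2 / D := by
    intro hD t hta
    have ht0 : (0:ℝ) < t := lt_of_lt_of_le ha0 hta
    rw [div_le_div_iff₀ (by positivity) hD]
    rw [hFtop' t hta]
    nlinarith [sq_nonneg (c * t - D)]
  -- the middle estimate: for 1 ≤ t ≤ a,  2 F t * a² ≤ 2 F a * t²
  have hmid : ∀ t : ℝ, 1 ≤ t → t ≤ a → 2 * F t * a ^ 2 ≤ 2 * F a * t ^ 2 := by
    intro t ht hta
    have hGt := hK4 t ht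
    have hB := hK6 t ht hta
    have hqt := hq t ht
    have hat2 : (0:ℝ) ≤ a^2 - t^2 := by nlinarith
    have h1 : (0:ℝ) ≤ (a^2 - t^2) * ((t^2 - 1) * (g t / t) - 2 * G t) :=
      mul_nonneg hat2 (by linarith)
    have h2 : (0:ℝ) ≤ t^2 * ((G a - G t) - (g t / t) * (a^2 - t^2) / 2) :=
      mul_nonneg (by positivity) (by linarith)
    have h3 : (0:ℝ) ≤ (a^2 - t^2) * (1 + g t / t) :=
      mul_nonneg hat2 (by linarith)
    rw [hFmid t ht hta, hFmid a ha.le le_rfl]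
    nlinarith [h1, h2, h3]
  rcases eq_or_lt_of_le hc0 with hc | hc
  · -- degenerate case: c = 0, i.e. g a = -a; everything vanishes
    have hgaa : g a = -a := by
      have := hc_def; rw [← hc] at this; linarith
    have hglin : ∀ t : ℝ, 1 ≤ t → t ≤ a → g t = -t := by
      intro t ht hta
      have ht0 : (0:ℝ) < t := lt_of_lt_of_le one_pos ht
      have h1 := hq t ht
      have h2 := hmono t a ht hta
      rw [hgaa] at h2
      have hna : (-a) / a = -1 := by field_simp
      rw [hna] at h2
      have hgt : g t / t = -1 := le_antisymm h2 h1
      field_simp at hgt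
      linarith
    have hGlin : ∀ t : ℝ, 1 ≤ t → t ≤ a → G t = (1 - t^2)/2 := by
      intro t ht hta
      rw [hG t]
      rw [integral_congr (g := fun u => -u)
        (fun u hu => by
          rw [Set.uIcc_of_le ht] at hu
          exact hglin u hu.1 (le_trans hu.2 hta))]
      rw [show (fun u : ℝ => -u) = (fun u : ℝ => u * (-1)) from by funext u; ring]
      rw [intervalIntegral.integral_mul_const, integral_id]
      ring
    have hD0 : D = 0 := by
      rw [← hD_def, hGlin a ha.le le_rfl, hgaa]; ring
    have hczero : c = 0 := hc.symm
    have hFzero : ∀ t : ℝ, 0 < t → F t = 0 := by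
      intro t ht
      rcases lt_or_ge t 1 with h1 | h1
      · exact hF01 t ht.le h1.le
      rcases le_or_gt t a with h2 | h2
      · rw [hFmid t h1 h2, hGlin t h1 h2]; ring
      · rw [hFtop' t h2.le, hczero, hD0]; ring
    refine ⟨a, le_rfl, ?_, ?_⟩
    · rw [hFzero a ha0, hczero, hD0]
      norm_num
    · intro t ht
      rw [hFzero t ht, hczero, hD0]
      norm_num
  · -- main case: c > 0
    have hD : 0 < D := lt_of_lt_of_le (by positivity) hDac
    refine ⟨D / c, ?_, ?_, ?_⟩
    · rw [le_div_iff₀ hc]; linarith [hDac]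
    · have hsa : a ≤ D / c := by rw [le_div_iff₀ hc]; linarith [hDac]
      have hFs := hFtop' (D / c) hsa
      have hcs : c * (D / c) = D := by field_simp
      rw [hFs, hcs]
      field_simp
      ring
    · intro t ht
      rcases lt_or_ge t 1 with h1 | h1
      · rw [hF01 t ht.le h1.le]
        have : (0:ℝ) ≤ c ^ 2 / D := by positivity
        simpa using this
      rcases le_or_gt t a with h2 | h2
      · have key := hmid t h1 h2
        have step1 : 2 * F t / t ^ 2 ≤ 2 * F a / a ^ 2 := by
          rw [div_le_div_iff₀ (by positivity) (by positivity)]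
          linarith
        exact le_trans step1 (htop hD a le_rfl)
      · exact htop hD t h2.le
end

section
/- Let g(s) = 1/s − 2 for s ≥ 1 and a > 1, and define f as in the paper's example with this g. Then c_f = (a−1)²/a² and ĉ_F := max_{s>0} 2F(s)/s² = (a−1)⁴/(a²(a² − 2 ln a − 1)). -/
lemma psi_mono_aux : MonotoneOn (fun x : ℝ => (x^2 + 2*Real.log x - 4*x + 3)/x^2) (Set.Ici 1) := by
  have hd : ∀ x : ℝ, 0 < x → HasDerivAt (fun x : ℝ => (x^2 + 2*Real.log x - 4*x + 3)/x^2)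
      (4*(x - 1 - Real.log x)/x^3) x := by
    intro x hx
    have hp : HasDerivAt (fun x:ℝ => x^2) (2*x) x := by simpa using hasDerivAt_pow 2 x
    have hl : HasDerivAt Real.log x⁻¹ x := Real.hasDerivAt_log hx.ne'
    have h1 : HasDerivAt (fun x : ℝ => x^2 + 2*Real.log x - 4*x + 3) (2*x + 2*x⁻¹ - 4) x := by
      have := ((hp.add (hl.const_mul 2)).sub ((hasDerivAt_id x).const_mul 4)).add_const 3
      refine this.congr_deriv ?_
      ring
    have := h1.div hp (pow_ne_zero 2 hx.ne')
    refine this.congr_deriv ?_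
    field_simp
    ring
  apply monotoneOn_of_deriv_nonneg (convex_Ici 1)
  · intro x hx
    exact ((hd x (lt_of_lt_of_le one_pos hx)).continuousAt).continuousWithinAt
  · intro x hx
    rw [interior_Ici] at hx
    exact ((hd x (lt_trans one_pos hx)).differentiableAt).differentiableWithinAt
  · intro x hx
    rw [interior_Ici] at hx
    rw [(hd x (lt_trans one_pos hx)).deriv]
    have hx0 : (0:ℝ) < x := lt_trans one_pos hx
    have hxl := Real.log_le_sub_one_of_pos hx0
    apply div_nonneg (by linarith) (by positivity)

theorem stmt_12 (a : ℝ) (ha : 1 < a)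
    (f : ℝ → ℝ)
    (hfdef : ∀ s : ℝ,
      f s = if s < 1 then 0 else if s < a then s + (1 / s - 2) else a + (1 / a - 2))
    (F : ℝ → ℝ) (hF : ∀ s, F s = ∫ t in (0:ℝ)..s, f t) :
    IsGreatest ((fun s => f s / s) '' Set.Ioi 0) ((a - 1) ^ 2 / a ^ 2) ∧
    IsGreatest ((fun s => 2 * F s / s ^ 2) '' Set.Ioi 0)
      ((a - 1) ^ 4 / (a ^ 2 * (a ^ 2 - 2 * Real.log a - 1))) := by
  have ha0 : (0:ℝ) < a := lt_trans one_pos ha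
  have ha0' : a ≠ 0 := ha0.ne'
  have hL : Real.log a < a - 1 := by
    have := Real.log_lt_sub_one_of_pos ha0 ha.ne'
    linarith
  have hD : 0 < a^2 - 2*Real.log a - 1 := by nlinarith [sq_nonneg (a-1)]
  -- continuity and integrability of f
  have hclamp : ∀ s : ℝ, (0:ℝ) < min (max s 1) a :=
    fun s => lt_min (lt_of_lt_of_le one_pos (le_max_right s 1)) ha0
  have hfeq : f = fun s => min (max s 1) a + (1 / min (max s 1) a - 2) := by
    funext s
    rw [hfdef]
    rcases lt_or_ge s 1 with h1 | h1
    · rw [if_pos h1, max_eq_right h1.le, min_eq_left ha.le]; norm_num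
    · rw [if_neg (not_lt.2 h1), max_eq_left h1]
      rcases lt_or_ge s a with h2 | h2
      · rw [if_pos h2, min_eq_left h2.le]
      · rw [if_neg (not_lt.2 h2), min_eq_right h2]
  have hcm : Continuous fun s : ℝ => min (max s 1) a :=
    (continuous_id.max continuous_const).min continuous_const
  have hfc : Continuous f := by
    rw [hfeq]
    exact hcm.add ((continuous_const.div hcm fun s => (hclamp s).ne').sub continuous_const)
  have hint : ∀ u v : ℝ, IntervalIntegrable f MeasureTheory.volume u v :=
    fun u v => hfc.intervalIntegrable u v
  -- F = 0 on [0,1]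
  have hF1 : ∀ s : ℝ, 0 ≤ s → s ≤ 1 → F s = 0 := by
    intro s h0 h1
    rw [hF, intervalIntegral.integral_congr (g := fun _ => (0:ℝ)) ?_]
    · simp
    · intro t ht
      rw [Set.uIcc_of_le h0] at ht
      rw [hfdef]
      rcases lt_or_ge t 1 with h | h
      · rw [if_pos h]
      · have ht1 : t = 1 := le_antisymm (ht.2.trans h1) h
        rw [if_neg (not_lt.2 h), if_pos (ht1 ▸ ha), ht1]; norm_num
  -- key integral
  have hI : ∀ s : ℝ, 1 ≤ s →
      (∫ t in (1:ℝ)..s, (t + (1/t - 2))) = s^2/2 + Real.log s - 2*s + 3/2 := by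
    intro s hs
    have h0ni : ∀ t ∈ Set.uIcc (1:ℝ) s, t ≠ 0 := by
      intro t ht
      rw [Set.uIcc_of_le hs] at ht
      exact (lt_of_lt_of_le one_pos ht.1).ne'
    have h1t : IntervalIntegrable (fun t:ℝ => 1/t) MeasureTheory.volume 1 s := by
      apply ContinuousOn.intervalIntegrable
      exact ContinuousOn.div continuousOn_const continuousOn_id h0ni
    rw [intervalIntegral.integral_add intervalIntegral.intervalIntegrable_id
        (h1t.sub (intervalIntegrable_const)),
      intervalIntegral.integral_sub h1t intervalIntegrable_const,
      integral_id,
      integral_one_div (fun h => by simpa using h0ni 0 h),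
      intervalIntegral.integral_const]
    rw [div_one, smul_eq_mul]
    ring
  -- F on [1,a]
  have hF2 : ∀ s : ℝ, 1 ≤ s → s ≤ a → F s = s^2/2 + Real.log s - 2*s + 3/2 := by
    intro s h1 h2
    have e0 : (∫ t in (0:ℝ)..1, f t) = 0 := by
      have := hF1 1 zero_le_one le_rfl; rwa [hF] at this
    rw [hF, ← intervalIntegral.integral_add_adjacent_intervals (hint 0 1) (hint 1 s), e0, zero_add,
      intervalIntegral.integral_congr (g := fun t => t + (1/t - 2)) ?_, hI s h1]
    intro t ht
    rw [Set.uIcc_of_le h1] at ht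
    rw [hfdef, if_neg (not_lt.2 ht.1)]
    rcases lt_or_ge t a with h | h
    · rw [if_pos h]
    · have hta : t = a := le_antisymm (ht.2.trans h2) h
      rw [if_neg (not_lt.2 h), hta]
  -- F on [a,∞)
  have hF3 : ∀ s : ℝ, a ≤ s → F s = F a + (a + (1/a - 2)) * (s - a) := by
    intro s hs
    have e0 : (∫ t in (0:ℝ)..a, f t) = F a := (hF a).symm
    rw [hF, ← intervalIntegral.integral_add_adjacent_intervals (hint 0 a) (hint a s), e0,
      intervalIntegral.integral_congr (g := fun _ => a + (1/a - 2)) ?_,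
      intervalIntegral.integral_const, smul_eq_mul, mul_comm]
    intro t ht
    rw [Set.uIcc_of_le hs] at ht
    rw [hfdef, if_neg (not_lt.2 (le_trans ha.le ht.1)), if_neg (not_lt.2 ht.1)]
  have hFa : F a = a^2/2 + Real.log a - 2*a + 3/2 := hF2 a ha.le le_rfl
  constructor
  · -- part 1
    constructor
    · refine ⟨a, ha0, ?_⟩
      simp only
      rw [hfdef a, if_neg (not_lt.2 ha.le), if_neg (lt_irrefl a)]
      field_simp
      ring
    · rintro y ⟨s, hs, rfl⟩
      simp only [Set.mem_Ioi] at hs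
      simp only
      rw [hfdef s]
      split_ifs with h1 h2
      · rw [zero_div]
        positivity
      · have h1' : (1:ℝ) ≤ s := not_lt.1 h1
        have hs0 : s ≠ 0 := hs.ne'
        have key : (s + (1/s - 2))/s = (s-1)^2/s^2 := by field_simp; ring
        rw [key, div_le_div_iff₀ (by positivity) (by positivity)]
        nlinarith [mul_nonneg (sub_nonneg.2 h2.le) (show (0:ℝ) ≤ 2*a*s - s - a by nlinarith)]
      · have has : a ≤ s := not_lt.1 h2
        have hnum : a + (1/a - 2) = (a-1)^2/a := by field_simp; ring
        rw [hnum, div_div]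
        apply div_le_div_of_nonneg_left (by positivity) (by positivity)
        nlinarith
  · -- part 2
    set L := Real.log a with hLdef
    set D := a^2 - 2*L - 1 with hDdef
    set c := (a-1)^2/a with hcdef
    have ha1 : (0:ℝ) < a - 1 := by linarith
    have ha1' : a - (1:ℝ) ≠ 0 := ha1.ne'
    have hc0 : 0 < c := by rw [hcdef]; exact div_pos (pow_pos ha1 2) ha0
    have hca : c * a = (a-1)^2 := by rw [hcdef]; field_simp
    have hcc : a + (1/a - 2) = c := by
      rw [hcdef, eq_div_iff ha0', add_mul, sub_mul, one_div, inv_mul_cancel₀ ha0']; ring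
    have hM : (a - 1) ^ 4 / (a ^ 2 * D) = c^2/D := by
      rw [hcdef, div_pow, div_div, ← pow_mul]
    have hMD : (a - 1) ^ 4 / (a ^ 2 * D) * D = c^2 := by
      rw [hM, div_mul_cancel₀ _ hD.ne']
    have h2Fa : 2 * F a = 2*c*a - D := by
      rw [hFa]; linear_combination hDdef - 2 * hca
    set t := a * D / (a-1)^2 with htdef
    have hDa : (a-1)^2 < D := by rw [hDdef]; nlinarith
    have hta : a ≤ t := by
      rw [htdef, le_div_iff₀ (pow_pos ha1 2)]
      nlinarith [mul_lt_mul_of_pos_left hDa ha0]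
    have ht0 : 0 < t := lt_of_lt_of_le ha0 hta
    clear_value L D c t
    have hct : c * t = D := by
      rw [hcdef, htdef]
      field_simp [ha0', ha1']
    constructor
    · refine ⟨t, ht0, ?_⟩
      simp only
      rw [hF3 t hta, hcc, div_eq_iff (pow_ne_zero 2 ht0.ne'), hM]
      have h1 : 2 * (F a + c * (t - a)) = 2*c*t - D := by rw [mul_add, h2Fa]; ring
      have h2 : c^2/D*t^2 = D := by
        rw [div_mul_eq_mul_div, div_eq_iff hD.ne', ← hct]; ring
      rw [h1, h2]; linear_combination 2 * hct
    · rintro y ⟨s, hs, rfl⟩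
      simp only [Set.mem_Ioi] at hs
      simp only
      rw [div_le_iff₀ (pow_pos hs 2)]
      have hM0 : 0 ≤ (a - 1) ^ 4 / (a ^ 2 * D) := by positivity
      rcases le_or_gt s 1 with h1 | h1
      · rw [hF1 s hs.le h1, mul_zero]
        positivity
      · rcases le_or_gt s a with h2 | h2
        · -- 1 ≤ s ≤ a
          have hpsi : (s^2 + 2*Real.log s - 4*s + 3)/s^2 ≤ (a^2 + 2*L - 4*a + 3)/a^2 := by
            have := psi_mono_aux (Set.mem_Ici.2 h1.le) (Set.mem_Ici.2 ha.le) h2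
            rw [hLdef]
            simpa using this
          have hpa : (a^2 + 2*L - 4*a + 3)/a^2 ≤ (a - 1) ^ 4 / (a ^ 2 * D) := by
            rw [div_le_div_iff₀ (by positivity) (mul_pos (by positivity) hD), hDdef]
            nlinarith [mul_nonneg (sq_nonneg (a - 1 - L)) (sq_nonneg a)]
          have h2F : 2 * F s = (s^2 + 2*Real.log s - 4*s + 3)/s^2 * s^2 := by
            rw [hF2 s h1.le h2]
            field_simp
            ring
          rw [h2F]
          exact mul_le_mul_of_nonneg_right (hpsi.trans hpa) (sq_nonneg s)
        · -- a ≤ s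
          rw [hF3 s h2.le, hcc]
          have h1s : 2 * (F a + c * (s - a)) = 2*c*s - D := by rw [mul_add, h2Fa]; ring
          rw [h1s, hM, div_mul_eq_mul_div, le_div_iff₀ hD]
          have h3 : c^2*s^2 - (2*c*s - D)*D = (c*s - D)^2 := by ring
          linarith only [h3, sq_nonneg (c*s - D)]
end
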